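/- Let x ∈ ℂ^N have all components nonzero, and let W = {w_1, ..., w_R} be N-periodic windows with l(w_r) ≤ N/2 for all r, Σ_{r=1}^R |β_r(m)|² ≠ 0 for all 0 ≤ m ≤ N−1, and gcd(l(w_1)−1, ..., l(w_R)−1, N) = 1. Then x can be recovered up to a global phase from the magnitude measurements |X_{w_r}(m,k)| (1 ≤ r ≤ R, 0 ≤ m, k ≤ N−1) of its multiple-window STFT with L = 1. -/

import Mathlib

/-- Multiple-window short-time Fourier transform. -/
noncomputable def stft {N : ℕ} [NeZero N] (L : ℕ) (x w : ZMod N → ℂ) (m k : ℕ) : ℂ :=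
  (N : ℂ)⁻¹ * ∑ n : ZMod N, x n * w (((L * m : ℕ) : ZMod N) - n) *
    Complex.exp (-(2 * Real.pi * Complex.I * (k : ℂ) * (n.val : ℂ)) / (N : ℂ))

/-- DFT of the squared magnitudes of a vector: `(1/N) ∑_n |u(n)|² e^{-2πikn/N}`. -/
noncomputable def dftSq {N : ℕ} [NeZero N] (u : ZMod N → ℂ) (k : ℕ) : ℂ :=
  (N : ℂ)⁻¹ * ∑ n : ZMod N, (‖u n‖ ^ 2 : ℝ) *
    Complex.exp (-(2 * Real.pi * Complex.I * (k : ℂ) * (n.val : ℂ)) / (N : ℂ))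

open Complex Finset
open scoped ComplexConjugate

variable (N : ℕ) [NeZero N]

noncomputable def ee (t : ZMod N) : ℂ :=
  Complex.exp (-(2 * Real.pi * Complex.I * (t.val : ℂ)) / (N : ℂ))

variable {N}

lemma hNc : (N : ℂ) ≠ 0 := Nat.cast_ne_zero.2 (NeZero.ne N)

lemma exp_mod (v q : ℕ) :
    Complex.exp (-(2 * Real.pi * Complex.I * (((v : ℂ) + (q : ℂ) * (N : ℂ)))) / (N : ℂ))
      = Complex.exp (-(2 * Real.pi * Complex.I * (v : ℂ)) / (N : ℂ)) := by
  have hN : (N : ℂ) ≠ 0 := hNc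
  have key : -(2 * Real.pi * Complex.I * (((v : ℂ) + (q : ℂ) * (N : ℂ)))) / (N : ℂ)
      = -(2 * Real.pi * Complex.I * (v : ℂ)) / (N : ℂ)
        + ((↑(-(q : ℤ)) : ℂ)) * (2 * Real.pi * Complex.I) := by
    push_cast
    field_simp
    ring
  rw [key, Complex.exp_add, Complex.exp_int_mul_two_pi_mul_I, mul_one]

lemma ee_natCast (j : ℕ) :
    Complex.exp (-(2 * Real.pi * Complex.I * (j : ℂ)) / (N : ℂ)) = ee N (j : ZMod N) := by
  have hval : ((j : ZMod N)).val = j % N := ZMod.val_natCast N j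
  have hj : (j : ℂ) = ((j % N : ℕ) : ℂ) + ((j / N : ℕ) : ℂ) * (N : ℂ) := by
    calc (j : ℂ) = ((j % N + N * (j / N) : ℕ) : ℂ) := by rw [Nat.mod_add_div]
    _ = _ := by push_cast; ring
  rw [ee, hval, hj, exp_mod]

omit [NeZero N] in
lemma ee_zero : ee N 0 = 1 := by simp [ee]

lemma ee_add (s t : ZMod N) : ee N (s + t) = ee N s * ee N t := by
  have h1 : s + t = ((s.val + t.val : ℕ) : ZMod N) := by
    push_cast [ZMod.natCast_val, ZMod.cast_id]; rfl
  rw [h1, ← ee_natCast, ee, ee, ← Complex.exp_add]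
  congr 1
  have hN : (N : ℂ) ≠ 0 := hNc
  rw [Nat.cast_add]
  field_simp
  ring

lemma ee_pow (k : ℕ) (t : ZMod N) : ee N ((k : ZMod N) * t) = ee N t ^ k := by
  have h1 : (k : ZMod N) * t = ((k * t.val : ℕ) : ZMod N) := by
    push_cast [ZMod.natCast_val, ZMod.cast_id]; rfl
  rw [h1, ← ee_natCast, ee, ← Complex.exp_nat_mul]
  congr 1
  have hN : (N : ℂ) ≠ 0 := hNc
  rw [Nat.cast_mul]
  ring

lemma exp_ne_one {v : ℕ} (h0 : v ≠ 0) (hlt : v < N) :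
    Complex.exp (-(2 * Real.pi * Complex.I * (v : ℂ)) / (N : ℂ)) ≠ 1 := by
  intro h
  rw [Complex.exp_eq_one_iff] at h
  obtain ⟨n, hn⟩ := h
  have hN : (N : ℂ) ≠ 0 := hNc
  have hpi : (2 * Real.pi * Complex.I : ℂ) ≠ 0 := by
    simp [Real.pi_ne_zero, Complex.I_ne_zero]
  field_simp at hn
  have h2 : -(v : ℂ) = (n : ℂ) * (N : ℂ) :=
    by linear_combination hn
  have h3 : ((-(v : ℤ)) : ℂ) = (((n * N : ℤ)) : ℂ) := by push_cast; linear_combination h2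
  have h4 : -(v : ℤ) = n * N := by exact_mod_cast h3
  have hdvd : (N : ℤ) ∣ (v : ℤ) := ⟨-n, by linarith⟩
  have := Int.le_of_dvd (by exact_mod_cast Nat.pos_of_ne_zero h0) hdvd
  omega

lemma ee_ne_one {t : ZMod N} (ht : t ≠ 0) : ee N t ≠ 1 := by
  have hv0 : t.val ≠ 0 := fun hv => ht (by rwa [← ZMod.val_eq_zero])
  exact exp_ne_one hv0 (ZMod.val_lt t)

lemma ee_geom_sum (t : ZMod N) :
    ∑ k ∈ Finset.range N, ee N t ^ k = if t = 0 then (N : ℂ) else 0 := by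
  by_cases ht : t = 0
  · simp [ht, ee_zero]
  · rw [if_neg ht, geom_sum_eq (ee_ne_one ht)]
    have : ee N t ^ N = 1 := by
      rw [← ee_pow, ZMod.natCast_self, zero_mul, ee_zero]
    rw [this, sub_self, zero_div]

lemma sum_univ_ee (t : ZMod N) :
    ∑ q : ZMod N, ee N (q * t) = if t = 0 then (N : ℂ) else 0 := by
  rw [← ee_geom_sum]
  refine Finset.sum_nbij' (fun q => q.val) (fun k => (k : ZMod N)) ?_ ?_ ?_ ?_ ?_
  · intro q _; exact Finset.mem_range.2 (ZMod.val_lt q)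
  · intro k _; exact Finset.mem_univ _
  · intro q _; simp [ZMod.natCast_val, ZMod.cast_id]
  · intro k hk; exact ZMod.val_cast_of_lt (Finset.mem_range.1 hk)
  · intro q _
    rw [← ee_pow]
    congr 1
    rw [ZMod.natCast_val, ZMod.cast_id]


lemma norm_ee (t : ZMod N) : ‖ee N t‖ = 1 := by
  have h : -(2 * Real.pi * Complex.I * (t.val : ℂ)) / (N : ℂ)
      = ((-(2 * Real.pi * t.val / N) : ℝ) : ℂ) * Complex.I := by
    push_cast
    ring
  rw [ee, h, Complex.norm_exp_ofReal_mul_I]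

lemma conj_ee (t : ZMod N) : (starRingEnd ℂ) (ee N t) = ee N (-t) := by
  have h1 : ee N t ≠ 0 := Complex.exp_ne_zero _
  apply mul_left_cancel₀ h1
  rw [Complex.mul_conj, ← ee_add, add_neg_cancel, ee_zero]
  rw [Complex.normSq_eq_norm_sq, norm_ee]
  norm_num

lemma dft_eq_zero {f : ZMod N → ℂ}
    (h : ∀ q : ZMod N, ∑ n : ZMod N, f n * ee N (q * n) = 0) (m : ZMod N) : f m = 0 := by
  have h0 : ∑ q : ZMod N, (∑ n : ZMod N, f n * ee N (q * n)) * ee N (q * (-m)) = 0 := by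
    simp only [h, zero_mul, Finset.sum_const_zero]
  have h1 : ∀ q : ZMod N, (∑ n : ZMod N, f n * ee N (q * n)) * ee N (q * (-m))
      = ∑ n : ZMod N, f n * ee N (q * (n - m)) := by
    intro q
    rw [Finset.sum_mul]
    refine Finset.sum_congr rfl fun n _ => ?_
    rw [mul_assoc, ← ee_add]
    congr 2
    ring
  rw [Finset.sum_congr rfl fun q _ => h1 q, Finset.sum_comm] at h0
  have h2 : ∀ n : ZMod N, ∑ q : ZMod N, f n * ee N (q * (n - m))
      = f n * (if n - m = 0 then (N : ℂ) else 0) := by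
    intro n
    rw [← Finset.mul_sum, sum_univ_ee]
  rw [Finset.sum_congr rfl fun n _ => h2 n] at h0
  rw [Finset.sum_eq_single m (fun n _ hn => by
        rw [if_neg (sub_ne_zero.2 hn), mul_zero])
      (fun hm => absurd (Finset.mem_univ m) hm)] at h0
  rw [sub_self, if_pos rfl] at h0
  exact (mul_eq_zero.1 h0).resolve_right hNc

lemma dft_conv (f g : ZMod N → ℂ) (q : ZMod N) :
    ∑ m : ZMod N, (∑ n : ZMod N, f n * g (m - n)) * ee N (q * m)
      = (∑ n : ZMod N, f n * ee N (q * n)) * (∑ v : ZMod N, g v * ee N (q * v)) := by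
  have h1 : ∀ m : ZMod N, (∑ n : ZMod N, f n * g (m - n)) * ee N (q * m)
      = ∑ n : ZMod N, f n * (g (m - n) * ee N (q * m)) := by
    intro m; rw [Finset.sum_mul]; refine Finset.sum_congr rfl fun n _ => by ring
  rw [Finset.sum_congr rfl fun m _ => h1 m, Finset.sum_comm]
  rw [Finset.sum_mul]
  refine Finset.sum_congr rfl fun n _ => ?_
  rw [← Finset.mul_sum, mul_assoc]
  congr 1
  rw [Finset.mul_sum]
  rw [← Equiv.sum_comp (Equiv.addRight n) (fun m => g (m - n) * ee N (q * m))]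
  refine Finset.sum_congr rfl fun v _ => ?_
  simp only [Equiv.coe_addRight, add_sub_cancel_right]
  rw [show q * (v + n) = q * n + q * v by ring, ee_add]
  ring

lemma conj_Ninv : (starRingEnd ℂ) ((N : ℂ)⁻¹) = (N : ℂ)⁻¹ := by
  rw [map_inv₀, Complex.conj_natCast]

lemma normsq_cast (S : ℂ) : ((‖S‖ ^ 2 : ℝ) : ℂ) = S * (starRingEnd ℂ) S := by
  rw [Complex.mul_conj, Complex.normSq_eq_norm_sq]

lemma stft_autocorr (z wr : ZMod N → ℂ) (m p : ZMod N) :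
    ∑ k ∈ Finset.range N, ((‖stft 1 z wr m.val k‖ ^ 2 : ℝ) : ℂ) * ee N ((k : ZMod N) * p)
      = (N : ℂ)⁻¹ * ∑ n : ZMod N,
          (z n * wr (m - n)) * (starRingEnd ℂ) (z (n + p) * wr (m - n - p)) := by
  set F : ZMod N → ℂ := fun n => z n * wr (m - n) with hF
  have hstft : ∀ k : ℕ, stft 1 z wr m.val k
      = (N : ℂ)⁻¹ * ∑ n : ZMod N, F n * ee N ((k : ZMod N) * n) := by
    intro k
    rw [stft]
    congr 1
    refine Finset.sum_congr rfl fun n _ => ?_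
    have hm : ((1 * m.val : ℕ) : ZMod N) = m := by
      simp [ZMod.natCast_val, ZMod.cast_id]
    have hexp : Complex.exp (-(2 * Real.pi * Complex.I * (k : ℂ) * (n.val : ℂ)) / (N : ℂ))
        = ee N ((k : ZMod N) * n) := by
      have h1 : -(2 * Real.pi * Complex.I * (k : ℂ) * (n.val : ℂ))
          = -(2 * Real.pi * Complex.I * ((k * n.val : ℕ) : ℂ)) := by
        rw [Nat.cast_mul]; ring
      rw [h1, ee_natCast]
      congr 1
      push_cast [ZMod.natCast_val, ZMod.cast_id]; rfl
    rw [hm, hexp, hF]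
  have hsq : ∀ k : ℕ, ((‖stft 1 z wr m.val k‖ ^ 2 : ℝ) : ℂ) * ee N ((k : ZMod N) * p)
      = (N : ℂ)⁻¹ * (N : ℂ)⁻¹ *
        ∑ n : ZMod N, ∑ n' : ZMod N,
          F n * (starRingEnd ℂ) (F n') * ee N ((k : ZMod N) * (n - n' + p)) := by
    intro k
    rw [normsq_cast, hstft k, map_mul, conj_Ninv, map_sum]
    have hc : ∀ n' : ZMod N, (starRingEnd ℂ) (F n' * ee N ((k : ZMod N) * n'))
        = (starRingEnd ℂ) (F n') * ee N (-((k : ZMod N) * n')) := by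
      intro n'; rw [map_mul, conj_ee]
    rw [Finset.sum_congr rfl fun n' _ => hc n']
    rw [show ((N:ℂ)⁻¹ * ∑ n : ZMod N, F n * ee N ((k : ZMod N) * n)) *
          ((N:ℂ)⁻¹ * ∑ n' : ZMod N, (starRingEnd ℂ) (F n') * ee N (-((k : ZMod N) * n')))
          * ee N ((k : ZMod N) * p)
        = (N:ℂ)⁻¹ * (N:ℂ)⁻¹ *
          (((∑ n : ZMod N, F n * ee N ((k : ZMod N) * n)) *
            (∑ n' : ZMod N, (starRingEnd ℂ) (F n') * ee N (-((k : ZMod N) * n'))))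
            * ee N ((k : ZMod N) * p)) from by ring]
    congr 1
    rw [Finset.sum_mul_sum, Finset.sum_mul]
    refine Finset.sum_congr rfl fun n _ => ?_
    rw [Finset.sum_mul]
    refine Finset.sum_congr rfl fun n' _ => ?_
    rw [show F n * ee N ((k : ZMod N) * n) *
          ((starRingEnd ℂ) (F n') * ee N (-((k : ZMod N) * n'))) * ee N ((k : ZMod N) * p)
        = F n * (starRingEnd ℂ) (F n') *
          (ee N ((k : ZMod N) * n) * ee N (-((k : ZMod N) * n')) * ee N ((k : ZMod N) * p))
        from by ring]
    congr 1
    rw [← ee_add, ← ee_add]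
    congr 1
    ring
  rw [Finset.sum_congr rfl fun k _ => hsq k]
  rw [← Finset.mul_sum]
  have hswap : ∑ k ∈ Finset.range N, ∑ n : ZMod N, ∑ n' : ZMod N,
        F n * (starRingEnd ℂ) (F n') * ee N ((k : ZMod N) * (n - n' + p))
      = ∑ n : ZMod N, ∑ n' : ZMod N,
        F n * (starRingEnd ℂ) (F n') * (if n - n' + p = 0 then (N : ℂ) else 0) := by
    rw [Finset.sum_comm]
    refine Finset.sum_congr rfl fun n _ => ?_
    rw [Finset.sum_comm]
    refine Finset.sum_congr rfl fun n' _ => ?_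
    rw [← Finset.mul_sum, ← ee_geom_sum]
    congr 1
    exact Finset.sum_congr rfl fun k _ => ee_pow k _
  rw [hswap]
  have hinner : ∀ n : ZMod N, ∑ n' : ZMod N,
        F n * (starRingEnd ℂ) (F n') * (if n - n' + p = 0 then (N : ℂ) else 0)
      = F n * (starRingEnd ℂ) (F (n + p)) * (N : ℂ) := by
    intro n
    rw [Finset.sum_eq_single (n + p)]
    · rw [if_pos (by ring)]
    · intro n' _ hn'
      rw [if_neg (fun h => hn' (by linear_combination (norm := ring_nf) -h)), mul_zero]
    · intro hmem; exact absurd (Finset.mem_univ _) hmem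
  rw [Finset.sum_congr rfl fun n _ => hinner n]
  have : ∑ n : ZMod N, F n * (starRingEnd ℂ) (F (n + p)) * (N : ℂ)
      = (N : ℂ) * ∑ n : ZMod N, F n * (starRingEnd ℂ) (F (n + p)) := by
    rw [Finset.mul_sum]; exact Finset.sum_congr rfl fun n _ => by ring
  rw [this]
  rw [show (N:ℂ)⁻¹ * (N:ℂ)⁻¹ * ((N:ℂ) * ∑ n : ZMod N, F n * (starRingEnd ℂ) (F (n + p)))
      = ((N:ℂ)⁻¹ * (N:ℂ) ) * ((N:ℂ)⁻¹ * ∑ n : ZMod N, F n * (starRingEnd ℂ) (F (n + p)))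
      from by ring, inv_mul_cancel₀ hNc, one_mul]
  congr 1
  refine Finset.sum_congr rfl fun n _ => ?_
  simp only [hF]
  rw [show m - (n + p) = m - n - p from by ring]

lemma dftSq_eq (u : ZMod N → ℂ) (q : ZMod N) :
    ∑ v : ZMod N, ((‖u v‖ ^ 2 : ℝ) : ℂ) * ee N (q * v) = (N : ℂ) * dftSq u q.val := by
  rw [dftSq, ← mul_assoc, mul_inv_cancel₀ hNc, one_mul]
  refine Finset.sum_congr rfl fun n _ => ?_
  congr 1
  have h1 : -(2 * Real.pi * Complex.I * ((q.val : ℕ) : ℂ) * (n.val : ℂ))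
      = -(2 * Real.pi * Complex.I * ((q.val * n.val : ℕ) : ℂ)) := by
    rw [Nat.cast_mul]; ring
  rw [h1, ee_natCast]
  congr 1
  push_cast [ZMod.natCast_val, ZMod.cast_id]; rfl


/-- If `x` has all components nonzero, each window `w_r` has supporting length
`l_r ≤ N/2` (support exactly `[a_r, a_r + l_r - 1] + Nℤ`), `∑_r |β_r(m)|² ≠ 0` for all
`m`, and `gcd(l_1 - 1, …, l_R - 1, N) = 1`, then `x` is determined up to a global phase
by the magnitudes of its multiple-window STFT with `L = 1`. -/
theorem stmt12 (N R : ℕ) [NeZero N] (hR : 0 < R)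
    (w : Fin R → ZMod N → ℂ) (a : Fin R → ZMod N) (l : Fin R → ℕ)
    (hl1 : ∀ r, 1 ≤ l r) (hlN : ∀ r, l r ≤ N / 2)
    (ha : ∀ r, w r (a r) ≠ 0) (hb : ∀ r, w r (a r + ((l r - 1 : ℕ) : ZMod N)) ≠ 0)
    (hsupp : ∀ r, ∀ n : ZMod N, (∀ j < l r, n ≠ a r + (j : ZMod N)) → w r n = 0)
    (hbeta : ∀ m < N, ∑ r : Fin R, ‖dftSq (w r) m‖ ^ 2 ≠ 0)
    (hgcd : Nat.gcd (Finset.univ.gcd fun r : Fin R => l r - 1) N = 1)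
    (x : ZMod N → ℂ) (hx : ∀ n, x n ≠ 0) :
    ∀ y : ZMod N → ℂ,
      (∀ r : Fin R, ∀ m < N, ∀ k < N,
        ‖stft 1 y (w r) m k‖ = ‖stft 1 x (w r) m k‖) →
      ∃ θ : ℝ, y = fun n => Complex.exp (Complex.I * θ) * x n := by
  intro y hmeas
  set C := starRingEnd ℂ with hC
  -- Step 1: autocorrelation measurements agree
  have hA : ∀ (r : Fin R) (m p : ZMod N),
      ∑ n : ZMod N, (y n * w r (m - n)) * C (y (n + p) * w r (m - n - p))
        = ∑ n : ZMod N, (x n * w r (m - n)) * C (x (n + p) * w r (m - n - p)) := by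
    intro r m p
    have h1 := stft_autocorr y (w r) m p
    have h2 := stft_autocorr x (w r) m p
    have h3 : ∑ k ∈ Finset.range N, ((‖stft 1 y (w r) m.val k‖ ^ 2 : ℝ) : ℂ) * ee N ((k : ZMod N) * p)
        = ∑ k ∈ Finset.range N, ((‖stft 1 x (w r) m.val k‖ ^ 2 : ℝ) : ℂ) * ee N ((k : ZMod N) * p) := by
      refine Finset.sum_congr rfl fun k hk => ?_
      rw [hmeas r m.val (ZMod.val_lt m) k (Finset.mem_range.1 hk)]
    rw [h1, h2] at h3
    exact mul_left_cancel₀ (inv_ne_zero hNc) h3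
  -- difference functions and window autocorrelations
  set f : ZMod N → ZMod N → ℂ := fun p n => x n * C (x (n + p)) - y n * C (y (n + p)) with hf
  set g : Fin R → ZMod N → ZMod N → ℂ := fun r p v => w r v * C (w r (v - p)) with hg
  have hzero : ∀ (r : Fin R) (p m : ZMod N), ∑ n : ZMod N, f p n * g r p (m - n) = 0 := by
    intro r p m
    have key : ∀ n : ZMod N, f p n * g r p (m - n)
        = (x n * w r (m - n)) * C (x (n + p) * w r (m - n - p))
          - (y n * w r (m - n)) * C (y (n + p) * w r (m - n - p)) := by
      intro n
      simp only [hf, hg, map_mul]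
      ring
    rw [Finset.sum_congr rfl fun n _ => key n, Finset.sum_sub_distrib, hA, sub_self]
  -- Fourier transforms multiply to zero
  have hprod : ∀ (r : Fin R) (p q : ZMod N),
      (∑ n : ZMod N, f p n * ee N (q * n)) * (∑ v : ZMod N, g r p v * ee N (q * v)) = 0 := by
    intro r p q
    rw [← dft_conv]
    exact Finset.sum_eq_zero fun m _ => by rw [hzero r p m, zero_mul]
  -- Step 2 : p = 0 gives equal magnitudes
  have habs : ∀ n : ZMod N, y n * C (y n) = x n * C (x n) := by
    have hf0 : ∀ q : ZMod N, ∑ n : ZMod N, f 0 n * ee N (q * n) = 0 := by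
      intro q
      obtain ⟨r, hr⟩ : ∃ r : Fin R, dftSq (w r) q.val ≠ 0 := by
        by_contra hcon
        push_neg at hcon
        exact hbeta q.val (ZMod.val_lt q) (by simp [hcon])
      have hg0 : ∑ v : ZMod N, g r 0 v * ee N (q * v) = (N : ℂ) * dftSq (w r) q.val := by
        rw [← dftSq_eq]
        refine Finset.sum_congr rfl fun v _ => ?_
        congr 1
        simp only [hg, sub_zero]
        rw [normsq_cast]
      have := hprod r 0 q
      rw [hg0] at this
      rcases mul_eq_zero.1 this with h | h
      · exact h
      · exact absurd ((mul_eq_zero.1 h).resolve_left hNc) hr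
    have := fun n => dft_eq_zero hf0 n
    intro n
    have h := this n
    simp only [hf, add_zero] at h
    linear_combination -h
  -- equal norms, nonzero y
  have hnorm : ∀ n : ZMod N, ‖y n‖ = ‖x n‖ := by
    intro n
    have h := habs n
    rw [hC, Complex.mul_conj, Complex.mul_conj] at h
    have h2 : Complex.normSq (y n) = Complex.normSq (x n) := by exact_mod_cast h
    rw [Complex.normSq_eq_norm_sq, Complex.normSq_eq_norm_sq] at h2
    calc ‖y n‖ = Real.sqrt (‖y n‖ ^ 2) := (Real.sqrt_sq (norm_nonneg _)).symm
    _ = Real.sqrt (‖x n‖ ^ 2) := by rw [h2]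
    _ = ‖x n‖ := Real.sqrt_sq (norm_nonneg _)
  have hy : ∀ n, y n ≠ 0 := by
    intro n hn
    have := hnorm n
    rw [hn, norm_zero] at this
    exact hx n (norm_eq_zero.1 this.symm)
  -- the ratio function
  set u : ZMod N → ℂ := fun n => y n / x n with hu
  have hunorm : ∀ n, ‖u n‖ = 1 := by
    intro n
    rw [hu]
    simp only [norm_div, hnorm n, div_self (norm_ne_zero_iff.2 (hx n))]
  have huconj : ∀ n, u n * C (u n) = 1 := by
    intro n
    rw [hC, Complex.mul_conj, Complex.normSq_eq_norm_sq, hunorm n]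
    norm_num
  have hyux : ∀ n, y n = u n * x n := by
    intro n
    exact (div_mul_cancel₀ (y n) (hx n)).symm
  -- Step 3 : p = d r gives periodicity
  set d : Fin R → ZMod N := fun r => ((l r - 1 : ℕ) : ZMod N) with hd
  have hperiod : ∀ (r : Fin R) (n : ZMod N), u (n + d r) = u n := by
    intro r
    -- support of g r (d r) is the single point a r + d r
    have h2l : 2 * l r ≤ N := by
      have := hlN r
      omega
    have hg_supp : ∀ v : ZMod N, v ≠ a r + d r → g r (d r) v = 0 := by
      intro v hv
      simp only [hg]
      by_cases h1 : w r v = 0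
      · rw [h1, zero_mul]
      · apply mul_eq_zero.2
        right
        rw [hC, map_eq_zero]
        -- v = a r + j for some j < l r
        obtain ⟨j, hjl, hj⟩ : ∃ j, j < l r ∧ v = a r + (j : ZMod N) := by
          by_contra hcon
          push_neg at hcon
          exact h1 (hsupp r v fun j hjl => hcon j hjl)
        apply hsupp r
        intro j' hj' heq
        -- v - d r = a r + j'  means  j = j' + (l r - 1) in ZMod N
        rw [hj] at heq
        have hcast : ((j : ℕ) : ZMod N) = ((j' + (l r - 1) : ℕ) : ZMod N) := by
          simp only [hd] at heq
          push_cast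
          linear_combination (norm := ring_nf) heq
        have hjlt : j < N := by omega
        have hj'lt : j' + (l r - 1) < N := by omega
        have : j = j' + (l r - 1) := by
          have := congrArg ZMod.val hcast
          rwa [ZMod.val_cast_of_lt hjlt, ZMod.val_cast_of_lt hj'lt] at this
        -- then j ≥ l r - 1 and j < l r forces j = l r - 1, j' = 0, i.e. v = a r + d r
        have hj0 : j' = 0 ∧ j = l r - 1 := by omega
        apply hv
        rw [hj, hd, hj0.2]
    have hgval : g r (d r) (a r + d r) ≠ 0 := by
      simp only [hg]
      rw [show a r + d r - d r = a r from by ring, hC]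
      exact mul_ne_zero (by simp only [hd]; exact hb r) (by rw [map_ne_zero]; exact ha r)
    -- the transform of g is nonvanishing
    have hghat : ∀ q : ZMod N, ∑ v : ZMod N, g r (d r) v * ee N (q * v) ≠ 0 := by
      intro q
      rw [Finset.sum_eq_single (a r + d r)
        (fun v _ hv => by rw [hg_supp v hv, zero_mul])
        (fun hmem => absurd (Finset.mem_univ _) hmem)]
      exact mul_ne_zero hgval (Complex.exp_ne_zero _)
    have hfd : ∀ n : ZMod N, f (d r) n = 0 := by
      apply dft_eq_zero
      intro q
      rcases mul_eq_zero.1 (hprod r (d r) q) with h | h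
      · exact h
      · exact absurd h (hghat q)
    intro n
    have h := hfd n
    simp only [hf] at h
    -- y n C (y (n+d)) = x n C (x (n+d))
    have h2 : u n * C (u (n + d r)) = 1 := by
      have hxn := hx n
      have hxnd := hx (n + d r)
      have hyeq : y n * C (y (n + d r)) = x n * C (x (n + d r)) := by
        linear_combination -h
      rw [hyux n, hyux (n + d r), hC, map_mul] at hyeq
      have hxc : (starRingEnd ℂ) (x (n + d r)) ≠ 0 := by rw [map_ne_zero]; exact hxnd
      have hyeq2 : (u n * (starRingEnd ℂ) (u (n + d r))) * (x n * (starRingEnd ℂ) (x (n + d r)))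
          = 1 * (x n * (starRingEnd ℂ) (x (n + d r))) := by
        rw [one_mul]; linear_combination hyeq
      have hres := mul_right_cancel₀ (mul_ne_zero hxn hxc) hyeq2
      rw [hC]
      exact hres
    -- conclude u (n + d r) = u n
    have h3 := huconj (n + d r)
    have hune : u (n + d r) ≠ 0 := by
      intro h0
      rw [h0, map_zero, mul_zero] at h3
      exact one_ne_zero h3.symm
    have hCu : C (u (n + d r)) ≠ 0 := by rw [hC, map_ne_zero]; exact hune
    apply mul_right_cancel₀ hCu
    rw [h3, h2]
  -- Step 4 : the periods form a subgroup containing all d r and hence 1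
  let H : AddSubgroup (ZMod N) :=
    { carrier := {t : ZMod N | ∀ n, u (n + t) = u n}
      zero_mem' := fun n => by rw [add_zero]
      add_mem' := by
        intro s t hs ht n
        rw [← add_assoc, ht (n + s), hs n]
      neg_mem' := by
        intro t ht n
        have h := ht (n + -t)
        rw [add_assoc, neg_add_cancel, add_zero] at h
        exact h.symm }
  have hdH : ∀ r, d r ∈ H := fun r => hperiod r
  set K := AddSubgroup.comap (Int.castAddHom (ZMod N)) H with hK
  obtain ⟨c, hc⟩ := Int.subgroup_cyclic K
  have hNK : (N : ℤ) ∈ K := by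
    refine AddSubgroup.mem_comap.2 ?_
    have h0 : (Int.castAddHom (ZMod N)) (N : ℤ) = 0 := by
      simp
    rw [h0]
    exact H.zero_mem
  have hdK : ∀ r, ((l r - 1 : ℕ) : ℤ) ∈ K := by
    intro r
    refine AddSubgroup.mem_comap.2 ?_
    have h0 : (Int.castAddHom (ZMod N)) ((l r - 1 : ℕ) : ℤ) = d r := by
      simp [hd]
    rw [h0]
    exact hdH r
  have hcdvd : ∀ z : ℤ, z ∈ K → c ∣ z := by
    intro z hz
    rw [hc, AddSubgroup.mem_closure_singleton] at hz
    obtain ⟨n, hn⟩ := hz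
    exact ⟨n, by rw [← hn, zsmul_eq_mul]; push_cast; ring⟩
  have hnat : c.natAbs ∣ Nat.gcd (Finset.univ.gcd fun r : Fin R => l r - 1) N := by
    refine Nat.dvd_gcd ?_ ?_
    · refine Finset.dvd_gcd fun r _ => ?_
      have := Int.natAbs_dvd_natAbs.2 (hcdvd _ (hdK r))
      simpa using this
    · have := Int.natAbs_dvd_natAbs.2 (hcdvd _ hNK)
      simpa using this
  rw [hgcd, Nat.dvd_one] at hnat
  have h1K : (1 : ℤ) ∈ K := by
    rw [hc, AddSubgroup.mem_closure_singleton]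
    rcases Int.natAbs_eq_iff.1 hnat with h | h
    · exact ⟨1, by rw [h]; norm_num⟩
    · exact ⟨-1, by rw [h]; norm_num⟩
  have h1H : (1 : ZMod N) ∈ H := by
    have := AddSubgroup.mem_comap.1 h1K
    simpa using this
  have hu1 : ∀ n : ZMod N, u (n + 1) = u n := h1H
  have hconst : ∀ n : ZMod N, u n = u 0 := by
    have hk : ∀ k : ℕ, u ((k : ZMod N)) = u 0 := by
      intro k
      induction k with
      | zero => norm_num
      | succ k ih =>
        rw [Nat.cast_succ, hu1 (k : ZMod N)]
        exact ih
    intro n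
    have := hk n.val
    rwa [ZMod.natCast_val, ZMod.cast_id] at this
  -- conclusion
  refine ⟨(u 0).arg, ?_⟩
  funext n
  have hu0 : u 0 = Complex.exp (Complex.I * ((u 0).arg : ℝ)) := by
    have h := Complex.norm_mul_exp_arg_mul_I (u 0)
    rw [hunorm 0, Complex.ofReal_one, one_mul] at h
    exact h.symm.trans (by rw [mul_comm ((u 0).arg : ℂ) Complex.I])
  rw [hyux n, hconst n]
  exact congrArg (fun z => z * x n) hu0
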